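/- Let A, B be complex k×k matrices. If [A,B] = 0 and [A,A*] + [B,B*] is negative semidefinite, then [A,A*] = 0 and [B,B*] = 0 (i.e., A and B are both normal). -/

import Mathlib

open LinearMap Module

local notation "⟪" x ", " y "⟫" => @inner ℂ _ _ x y

set_option maxHeartbeats 1000000 in
private lemma normal_aux :
    ∀ (n : ℕ) (E : Type) [NormedAddCommGroup E] [InnerProductSpace ℂ E]
      [FiniteDimensional ℂ E], finrank ℂ E = n →
      ∀ (A B : E →ₗ[ℂ] E), A ∘ₗ B = B ∘ₗ A →
      (∀ x : E,
        (⟪x, ((A ∘ₗ adjoint A - adjoint A ∘ₗ A) + (B ∘ₗ adjoint B - adjoint B ∘ₗ B)) x⟫).re ≤ 0) →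
      A ∘ₗ adjoint A = adjoint A ∘ₗ A ∧ B ∘ₗ adjoint B = adjoint B ∘ₗ B := by
  intro n
  induction n with
  | zero =>
    intro E _ _ _ hdim A B _ _
    have : Subsingleton E := finrank_zero_iff.mp hdim
    exact ⟨LinearMap.ext fun x => Subsingleton.elim _ _,
      LinearMap.ext fun x => Subsingleton.elim _ _⟩
  | succ n IH =>
    intro E _ _ _ hdim A B hAB hneg
    have : Nontrivial E := Module.nontrivial_of_finrank_pos (R := ℂ) (by omega)
    -- common eigenvector
    obtain ⟨a, ha⟩ := Module.End.exists_eigenvalue (A : Module.End ℂ E)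
    have hWB : ∀ x ∈ Module.End.eigenspace (A : Module.End ℂ E) a,
        B x ∈ Module.End.eigenspace (A : Module.End ℂ E) a := by
      intro x hx
      rw [Module.End.mem_eigenspace_iff] at hx ⊢
      have h1 : A (B x) = B (A x) := congrFun (congrArg DFunLike.coe hAB) x
      rw [h1, hx, map_smul]
    have : Nontrivial (Module.End.eigenspace (A : Module.End ℂ E) a) :=
      Submodule.nontrivial_iff_ne_bot.mpr ha
    obtain ⟨b, hb⟩ := Module.End.exists_eigenvalue (B.restrict hWB : Module.End ℂ _)
    obtain ⟨w, hw⟩ := hb.exists_hasEigenvector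
    have hv0 : (w : E) ≠ 0 := by
      simpa [Submodule.coe_eq_zero] using hw.right
    have hAv : A (w : E) = a • (w : E) := Module.End.mem_eigenspace_iff.mp w.2
    have hBv : B (w : E) = b • (w : E) := by
      have h2 := congrArg (Subtype.val) hw.apply_eq_smul
      simpa [LinearMap.restrict_coe_apply] using h2
    set u : E := (‖(w : E)‖ : ℂ)⁻¹ • (w : E) with hu_def
    have hu : ‖u‖ = 1 := norm_smul_inv_norm hv0
    have hAu : A u = a • u := by
      rw [hu_def, map_smul, hAv, smul_comm]
    have hBu : B u = b • u := by
      rw [hu_def, map_smul, hBv, smul_comm]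
    have huu : ⟪u, u⟫ = 1 := by
      rw [inner_self_eq_norm_sq_to_K, hu]; norm_num
    clear hu_def
    clear_value u
    -- the adjoint also has u as eigenvector
    have keyA : ∀ (C : E →ₗ[ℂ] E) (c : ℂ), C u = c • u →
        ⟪u, (C ∘ₗ adjoint C - adjoint C ∘ₗ C) u⟫
          = ⟪adjoint C u - (starRingEnd ℂ c) • u, adjoint C u - (starRingEnd ℂ c) • u⟫ := by
      intro C c hCu
      have h1 : ⟪adjoint C u, u⟫ = c := by
        rw [adjoint_inner_left, hCu, inner_smul_right, huu, mul_one]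
      have h2 : ⟪u, adjoint C u⟫ = starRingEnd ℂ c := by
        rw [adjoint_inner_right, hCu, inner_smul_left, huu, mul_one]
      have h3 : ⟪u, C (adjoint C u)⟫ = ⟪adjoint C u, adjoint C u⟫ := by
        rw [← adjoint_inner_left]
      have h4 : ⟪u, adjoint C (C u)⟫ = ⟪C u, C u⟫ := by
        rw [adjoint_inner_right]
      simp only [LinearMap.sub_apply, LinearMap.comp_apply, inner_sub_right, inner_sub_left,
        inner_smul_left, inner_smul_right, map_smul, h1, h2, h3, h4, hCu, huu]
      ring
    have hsum : (⟪u, ((A ∘ₗ adjoint A - adjoint A ∘ₗ A) + (B ∘ₗ adjoint B - adjoint B ∘ₗ B)) u⟫).re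
        = ‖adjoint A u - (starRingEnd ℂ a) • u‖ ^ 2 + ‖adjoint B u - (starRingEnd ℂ b) • u‖ ^ 2 := by
      rw [LinearMap.add_apply, inner_add_right, keyA A a hAu, keyA B b hBu,
        inner_self_eq_norm_sq_to_K, inner_self_eq_norm_sq_to_K]
      simp [← Complex.ofReal_pow]
    have hA' : adjoint A u = (starRingEnd ℂ a) • u := by
      have h5 := hneg u
      rw [hsum] at h5
      have h6 : ‖adjoint A u - (starRingEnd ℂ a) • u‖ = 0 := by nlinarith [sq_nonneg ‖adjoint A u - (starRingEnd ℂ a) • u‖, sq_nonneg ‖adjoint B u - (starRingEnd ℂ b) • u‖, norm_nonneg (adjoint A u - (starRingEnd ℂ a) • u), norm_nonneg (adjoint B u - (starRingEnd ℂ b) • u)]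
      exact sub_eq_zero.mp (norm_eq_zero.mp h6)
    have hB' : adjoint B u = (starRingEnd ℂ b) • u := by
      have h5 := hneg u
      rw [hsum] at h5
      have h6 : ‖adjoint B u - (starRingEnd ℂ b) • u‖ = 0 := by
        nlinarith [sq_nonneg ‖adjoint A u - (starRingEnd ℂ a) • u‖,
          sq_nonneg ‖adjoint B u - (starRingEnd ℂ b) • u‖,
          norm_nonneg (adjoint A u - (starRingEnd ℂ a) • u),
          norm_nonneg (adjoint B u - (starRingEnd ℂ b) • u)]
      exact sub_eq_zero.mp (norm_eq_zero.mp h6)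
    -- the orthogonal complement of u is invariant under everything
    set V : Submodule ℂ E := (Submodule.span ℂ {u})ᗮ with hV_def
    have hinv : ∀ (C : E →ₗ[ℂ] E) (c : ℂ), adjoint C u = c • u → ∀ x ∈ V, C x ∈ V := by
      intro C c hCu x hx
      rw [hV_def, Submodule.mem_orthogonal_singleton_iff_inner_right] at hx ⊢
      rw [← adjoint_inner_left, hCu, inner_smul_left, hx, mul_zero]
    have hAV : ∀ x ∈ V, A x ∈ V := hinv A (starRingEnd ℂ a) hA'
    have hBV : ∀ x ∈ V, B x ∈ V := hinv B (starRingEnd ℂ b) hB'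
    have hA'V : ∀ x ∈ V, adjoint A x ∈ V := by
      refine hinv (adjoint A) a ?_ 
      rw [adjoint_adjoint, hAu]
    have hB'V : ∀ x ∈ V, adjoint B x ∈ V := by
      refine hinv (adjoint B) b ?_ 
      rw [adjoint_adjoint, hBu]
    set A₁ : V →ₗ[ℂ] V := A.restrict hAV
    set B₁ : V →ₗ[ℂ] V := B.restrict hBV
    have hadjA : adjoint A₁ = (adjoint A).restrict hA'V := by
      refine ((LinearMap.eq_adjoint_iff _ _).mpr ?_).symm
      intro x y
      rw [Submodule.coe_inner, Submodule.coe_inner, LinearMap.restrict_coe_apply,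
        LinearMap.restrict_coe_apply, adjoint_inner_left]
    have hadjB : adjoint B₁ = (adjoint B).restrict hB'V := by
      refine ((LinearMap.eq_adjoint_iff _ _).mpr ?_).symm
      intro x y
      rw [Submodule.coe_inner, Submodule.coe_inner, LinearMap.restrict_coe_apply,
        LinearMap.restrict_coe_apply, adjoint_inner_left]
    have hA₁ : ∀ x : V, ((A₁ x : E)) = A (x : E) := fun _ => rfl
    have hB₁ : ∀ x : V, ((B₁ x : E)) = B (x : E) := fun _ => rfl
    have hcomm₁ : A₁ ∘ₗ B₁ = B₁ ∘ₗ A₁ := by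
      ext x
      have h1 := LinearMap.ext_iff.mp hAB (x : E)
      simpa [A₁, B₁, LinearMap.restrict_coe_apply] using h1
    have hneg₁ : ∀ x : V,
        (⟪x, ((A₁ ∘ₗ adjoint A₁ - adjoint A₁ ∘ₗ A₁) + (B₁ ∘ₗ adjoint B₁ - adjoint B₁ ∘ₗ B₁)) x⟫).re
          ≤ 0 := by
      intro x
      have h1 : (⟪x, ((A₁ ∘ₗ adjoint A₁ - adjoint A₁ ∘ₗ A₁)
          + (B₁ ∘ₗ adjoint B₁ - adjoint B₁ ∘ₗ B₁)) x⟫ : ℂ)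
          = ⟪(x : E), ((A ∘ₗ adjoint A - adjoint A ∘ₗ A)
          + (B ∘ₗ adjoint B - adjoint B ∘ₗ B)) (x : E)⟫ := by
        rw [hadjA, hadjB, Submodule.coe_inner]
        simp only [LinearMap.add_apply, LinearMap.sub_apply, LinearMap.comp_apply,
          Submodule.coe_add, AddSubgroupClass.coe_sub, hA₁, hB₁, LinearMap.restrict_coe_apply]
      rw [h1]
      exact hneg _
    have hu0 : u ≠ 0 := by
      intro h
      rw [h, norm_zero] at hu
      norm_num at hu
    have hdimV : finrank ℂ V = n := by
      have : Fact (finrank ℂ E = n + 1) := ⟨hdim⟩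
      exact Submodule.finrank_orthogonal_span_singleton hu0
    obtain ⟨hNA, hNB⟩ := IH V hdimV A₁ B₁ hcomm₁ hneg₁
    -- now conclude
    have concl : ∀ (C : E →ₗ[ℂ] E) (c : ℂ) (hCV : ∀ x ∈ V, C x ∈ V)
        (hC'V : ∀ x ∈ V, adjoint C x ∈ V),
        C u = c • u → adjoint C u = (starRingEnd ℂ c) • u →
        adjoint (C.restrict hCV) = (adjoint C).restrict hC'V →
        (C.restrict hCV) ∘ₗ adjoint (C.restrict hCV)
          = adjoint (C.restrict hCV) ∘ₗ (C.restrict hCV) →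
        C ∘ₗ adjoint C = adjoint C ∘ₗ C := by
      intro C c hCV hC'V hCu hC'u hadj hN
      ext x
      have hyV : x - ⟪u, x⟫ • u ∈ V := by
        rw [hV_def, Submodule.mem_orthogonal_singleton_iff_inner_right]
        rw [inner_sub_right, inner_smul_right, huu, mul_one, sub_self]
      have hxeq : x = ⟪u, x⟫ • u + (x - ⟪u, x⟫ • u) := (add_sub_cancel _ _).symm
      have hker : ∀ y ∈ V, C (adjoint C y) = adjoint C (C y) := by
        intro y hy
        have hN' : (C.restrict hCV) ∘ₗ ((adjoint C).restrict hC'V)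
            = ((adjoint C).restrict hC'V) ∘ₗ (C.restrict hCV) := by rw [← hadj]; exact hN
        have h2 := congrArg Subtype.val (LinearMap.ext_iff.mp hN' ⟨y, hy⟩)
        simpa [LinearMap.restrict_coe_apply] using h2
      have hu_eq : C (adjoint C u) = adjoint C (C u) := by
        simp [hCu, hC'u, smul_smul, mul_comm]
      rw [LinearMap.comp_apply, LinearMap.comp_apply]
      conv_lhs => rw [hxeq]
      conv_rhs => rw [hxeq]
      rw [map_add, map_add, map_add, map_add, map_smul, map_smul, map_smul, map_smul,
        hu_eq, hker _ hyV]
    exact ⟨concl A a hAV hA'V hAu hA' hadjA hNA, concl B b hBV hB'V hBu hB' hadjB hNB⟩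

open scoped Matrix ComplexOrder
/-- If `[A,B] = 0` and `[A,A*] + [B,B*]` is negative semidefinite, then
`[A,A*] = 0` and `[B,B*] = 0`, i.e. `A` and `B` are normal. -/
theorem commuting_with_neg_semidef_bracket_sum_normal
    {k : ℕ} (A B : Matrix (Fin k) (Fin k) ℂ)
    (hAB : A * B = B * A)
    (hneg : (-((A * Aᴴ - Aᴴ * A) + (B * Bᴴ - Bᴴ * B))).PosSemidef) :
    A * Aᴴ = Aᴴ * A ∧ B * Bᴴ = Bᴴ * B := by
  have hmul : ∀ M N : Matrix (Fin k) (Fin k) ℂ,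
      Matrix.toEuclideanLin (M * N) = Matrix.toEuclideanLin M ∘ₗ Matrix.toEuclideanLin N := by
    intro M N
    rw [Matrix.toEuclideanLin_eq_toLin]
    exact Matrix.toLin_mul _ _ _ M N
  set A' := Matrix.toEuclideanLin A with hA'_def
  set B' := Matrix.toEuclideanLin B with hB'_def
  have hadjA : Matrix.toEuclideanLin Aᴴ = adjoint A' :=
    Matrix.toEuclideanLin_conjTranspose_eq_adjoint A
  have hadjB : Matrix.toEuclideanLin Bᴴ = adjoint B' :=
    Matrix.toEuclideanLin_conjTranspose_eq_adjoint B
  have hT : Matrix.toEuclideanLin ((A * Aᴴ - Aᴴ * A) + (B * Bᴴ - Bᴴ * B))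
      = (A' ∘ₗ adjoint A' - adjoint A' ∘ₗ A') + (B' ∘ₗ adjoint B' - adjoint B' ∘ₗ B') := by
    rw [map_add, map_sub, map_sub, hmul, hmul, hmul, hmul, hadjA, hadjB, hA'_def, hB'_def]
  have hcomm : A' ∘ₗ B' = B' ∘ₗ A' := by
    rw [hA'_def, hB'_def, ← hmul, ← hmul, hAB]
  have hneg' : ∀ x : EuclideanSpace ℂ (Fin k),
      (⟪x, ((A' ∘ₗ adjoint A' - adjoint A' ∘ₗ A')
        + (B' ∘ₗ adjoint B' - adjoint B' ∘ₗ B')) x⟫).re ≤ 0 := by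
    intro x
    rw [← hT]
    have h1 := hneg.re_dotProduct_nonneg ((WithLp.equiv 2 _) x)
    rw [Matrix.neg_mulVec, dotProduct_neg] at h1
    have h2 : (⟪x, Matrix.toEuclideanLin ((A * Aᴴ - Aᴴ * A) + (B * Bᴴ - Bᴴ * B)) x⟫ : ℂ)
        = dotProduct (star ((WithLp.equiv 2 _) x))
          (((A * Aᴴ - Aᴴ * A) + (B * Bᴴ - Bᴴ * B)) *ᵥ ((WithLp.equiv 2 _) x)) := by
      rw [EuclideanSpace.inner_eq_star_dotProduct, dotProduct_comm]; rfl
    rw [h2]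
    simpa using h1
  obtain ⟨h1, h2⟩ := normal_aux k (EuclideanSpace ℂ (Fin k)) finrank_euclideanSpace_fin
    A' B' hcomm hneg'
  constructor
  · apply Matrix.toEuclideanLin.injective
    rw [hmul, hmul, hadjA, ← hA'_def]
    exact h1
  · apply Matrix.toEuclideanLin.injective
    rw [hmul, hmul, hadjB, ← hB'_def]
    exact h2
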